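/- Let κ be a strongly inaccessible cardinal, let ⟨A_α : α < κ⟩ be a potential ◊_κ sequence, and let 0 < γ < κ. In the <κ-support product P of κ⁺ many copies of the diamond killing poset Q, the set D of conditions p such that for every ξ < κ⁺ the coordinate p(ξ) is either the maximum condition (∅,∅) or lies in D_γ is dense in P, and D is ≤γ-directed closed: every family ⟨p_α : α < γ⟩ of members of D that is directed (any two members have a common lower bound among the members) has a lower bound in D. -/

import Mathlib

open Set

/-- `C` is unbounded in `κ`. -/
def IsUnboundedIn (κ : Ordinal.{0}) (C : Set Ordinal.{0}) : Prop :=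
  ∀ α < κ, ∃ β ∈ C, α < β

/-- `C` contains all of its limit points below `κ`. -/
def IsClosedIn (κ : Ordinal.{0}) (C : Set Ordinal.{0}) : Prop :=
  ∀ α < κ, α ≠ 0 → (∀ β < α, ∃ γ ∈ C, β < γ ∧ γ < α) → α ∈ C

/-- `C ⊆ κ` is club in `κ`: unbounded and closed. -/
def IsClubIn (κ : Ordinal.{0}) (C : Set Ordinal.{0}) : Prop :=
  C ⊆ Set.Iio κ ∧ IsUnboundedIn κ C ∧ IsClosedIn κ C

/-- `S` is stationary in `κ`: it meets every club subset of `κ`. -/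
def IsStationaryIn (κ : Ordinal.{0}) (S : Set Ordinal.{0}) : Prop :=
  ∀ C, IsClubIn κ C → (S ∩ C).Nonempty

/-- The ordinal `α` is an infinite regular cardinal. -/
def IsRegOrd (α : Ordinal.{0}) : Prop :=
  ∃ c : Cardinal.{0}, c.IsRegular ∧ α = c.ord

/-- The ordinal `α` is a strongly inaccessible cardinal. -/
def IsInaccOrd (α : Ordinal.{0}) : Prop :=
  ∃ c : Cardinal.{0}, c.IsInaccessible ∧ α = c.ord

/-- `c` is a closed bounded subset of `κ`. -/
def IsClosedBddIn (κ : Ordinal.{0}) (c : Set Ordinal.{0}) : Prop :=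
  c ⊆ Set.Iio κ ∧ (∃ β, β < κ ∧ ∀ α ∈ c, α ≤ β) ∧ IsClosedIn κ c

/-- `p = (s, c)` is a condition of the diamond killing poset for the potential
`◊_κ` sequence `A`: `c` is a closed bounded subset of `κ`, `s ⊆ sup c`, and
`s ∩ α ≠ A α` for every strongly inaccessible `α ∈ c`. -/
def IsCond (κ : Ordinal.{0}) (A : Ordinal.{0} → Set Ordinal.{0})
    (p : Set Ordinal.{0} × Set Ordinal.{0}) : Prop :=
  IsClosedBddIn κ p.2 ∧ p.1 ⊆ Set.Iio (sSup p.2) ∧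
    ∀ α ∈ p.2, IsInaccOrd α → p.1 ∩ Set.Iio α ≠ A α

/-- The ordering of the diamond killing poset: `(s', c') ≤ (s, c)` iff
`s' ∩ sup c = s` and `c' ∩ (sup c + 1) = c`. -/
def CondLE (p q : Set Ordinal.{0} × Set Ordinal.{0}) : Prop :=
  p.1 ∩ Set.Iio (sSup q.2) = q.1 ∧ p.2 ∩ Set.Iic (sSup q.2) = q.2

/-- `D_γ`: the set of conditions `(s, c)` with `c \ γ ≠ ∅`. -/
def DSet (κ : Ordinal.{0}) (A : Ordinal.{0} → Set Ordinal.{0}) (γ : Ordinal.{0}) :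
    Set (Set Ordinal.{0} × Set Ordinal.{0}) :=
  {p | IsCond κ A p ∧ (p.2 \ Set.Iio γ).Nonempty}

/-- A condition of the `<κ`-support product of `κ⁺` many copies of the diamond
killing poset: `p ξ` is a condition for every `ξ < κ⁺`, `p ξ` is the maximum
condition `(∅, ∅)` off `κ⁺`, and `p ξ = (∅, ∅)` for all but fewer than `κ` many `ξ`. -/
def IsProdCond (κ : Cardinal.{0}) (A : Ordinal.{0} → Set Ordinal.{0})
    (p : Ordinal.{0} → Set Ordinal.{0} × Set Ordinal.{0}) : Prop :=
  (∀ ξ < (Order.succ κ).ord, IsCond κ.ord A (p ξ)) ∧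
  (∀ ξ, ¬ ξ < (Order.succ κ).ord → p ξ = (∅, ∅)) ∧
  Cardinal.mk {ξ : Ordinal.{0} // p ξ ≠ (∅, ∅)} < Cardinal.lift.{1,0} κ

/-- The coordinatewise ordering of the product. -/
def ProdLE (p q : Ordinal.{0} → Set Ordinal.{0} × Set Ordinal.{0}) : Prop :=
  ∀ ξ, CondLE (p ξ) (q ξ)

/-- The set `D` of product conditions all of whose coordinates are either the
maximum condition `(∅, ∅)` or lie in `D_γ`. -/
def ProdDSet (κ : Cardinal.{0}) (A : Ordinal.{0} → Set Ordinal.{0}) (γ : Ordinal.{0}) :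
    Set (Ordinal.{0} → Set Ordinal.{0} × Set Ordinal.{0}) :=
  {p | IsProdCond κ A p ∧ ∀ ξ < (Order.succ κ).ord, p ξ = (∅, ∅) ∨ p ξ ∈ DSet κ.ord A γ}


section Aux

open Cardinal

lemma bdd_of_closedBdd {κ : Ordinal.{0}} {c : Set Ordinal.{0}} (h : IsClosedBddIn κ c) :
    BddAbove c := by
  obtain ⟨-, ⟨β, -, hβ⟩, -⟩ := h
  exact ⟨β, fun x hx => hβ x hx⟩

lemma isCond_bot {κ : Ordinal.{0}} {A : Ordinal.{0} → Set Ordinal.{0}} (hκ : 0 < κ) :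
    IsCond κ A (∅, ∅) := by
  refine ⟨⟨empty_subset _, ⟨0, hκ, by simp⟩, ?_⟩, by simp, ?_⟩
  · intro α _ hα0 hlp
    obtain ⟨e, he, -⟩ := hlp 0 (pos_iff_ne_zero.mpr hα0)
    exact he.elim
  · intro α hα
    exact hα.elim

lemma condLE_bot_bot : CondLE (∅, ∅) (∅, ∅) := ⟨by simp, by simp⟩

lemma snd_empty_eq_bot {κ : Ordinal.{0}} {A : Ordinal.{0} → Set Ordinal.{0}}
    {p : Set Ordinal.{0} × Set Ordinal.{0}} (hp : IsCond κ A p) (h2 : p.2 = ∅) :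
    p = (∅, ∅) := by
  have h1 : p.1 = ∅ := by
    apply eq_empty_iff_forall_notMem.mpr
    intro x hx
    have hlt := hp.2.1 hx
    rw [h2] at hlt
    simp only [csSup_empty, mem_Iio, Ordinal.bot_eq_zero] at hlt
    exact (zero_le : (0 : Ordinal.{0}) ≤ x).not_gt hlt
  exact Prod.ext h1 h2

lemma sSup_mem_closedBdd {κ : Ordinal.{0}} {c : Set Ordinal.{0}} (hc : IsClosedBddIn κ c)
    (hne : c.Nonempty) : sSup c ∈ c := by
  obtain ⟨hsub, ⟨β, hβκ, hβ⟩, hcl⟩ := hc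
  have hbdd : BddAbove c := ⟨β, fun x hx => hβ x hx⟩
  by_cases h : sSup c ∈ c
  · exact h
  have hκ' : sSup c < κ := lt_of_le_of_lt (csSup_le hne hβ) hβκ
  have h0 : sSup c ≠ 0 := by
    intro h0
    obtain ⟨e, he⟩ := hne
    have he0 : e = 0 := le_antisymm (h0 ▸ le_csSup hbdd he) (zero_le : (0 : Ordinal.{0}) ≤ e)
    exact h (by rw [h0, ← he0]; exact he)
  refine absurd (hcl _ hκ' h0 ?_) h
  intro b hb
  obtain ⟨e, he, hbe⟩ := exists_lt_of_lt_csSup hne hb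
  exact ⟨e, he, hbe, lt_of_le_of_ne (le_csSup hbdd he) fun heq => h (heq ▸ he)⟩

lemma not_isInaccOrd_succ (x : Ordinal.{0}) : ¬ IsInaccOrd (x + 1) := by
  rintro ⟨c, hc, he⟩
  have hlim : Order.IsSuccLimit (Cardinal.ord c) := Cardinal.isSuccLimit_ord hc.1.le
  rw [← he] at hlim
  have h1 : x < x + 1 := by
    rw [Ordinal.add_one_eq_succ]; exact Order.lt_succ x
  have h2 := hlim.succ_lt h1
  rw [Ordinal.add_one_eq_succ] at h2
  exact absurd h2 (lt_irrefl _)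

lemma ord_pos_of_inacc {κ : Cardinal.{0}} (hκ : κ.IsInaccessible) : 0 < κ.ord :=
  (Cardinal.isSuccLimit_ord hκ.1.le).pos

lemma extend_cond {κ : Cardinal.{0}} (hκ : κ.IsInaccessible) {A : Ordinal.{0} → Set Ordinal.{0}}
    {γ : Ordinal.{0}} (hγ : γ < κ.ord) {p : Set Ordinal.{0} × Set Ordinal.{0}}
    (hp : IsCond κ.ord A p) (hpne : p ≠ (∅, ∅)) :
    ∃ q, q ∈ DSet κ.ord A γ ∧ CondLE q p ∧ q ≠ (∅, ∅) := by
  obtain ⟨hcb, hsub, hinacc⟩ := hp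
  have hbdd : BddAbove p.2 := bdd_of_closedBdd hcb
  have hcne : p.2.Nonempty := by
    rcases eq_empty_or_nonempty p.2 with h | h
    · exact absurd (snd_empty_eq_bot ⟨hcb, hsub, hinacc⟩ h) hpne
    · exact h
  have hσ : sSup p.2 ∈ p.2 := sSup_mem_closedBdd hcb hcne
  have hσκ : sSup p.2 < κ.ord := hcb.1 hσ
  set δ : Ordinal.{0} := max (sSup p.2) γ + 1 with hδdef
  have hmaxκ : max (sSup p.2) γ < κ.ord := max_lt hσκ hγ
  have hδκ : δ < κ.ord := by
    rw [hδdef, Ordinal.add_one_eq_succ]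
    exact (Cardinal.isSuccLimit_ord hκ.1.le).succ_lt hmaxκ
  have hltδ : max (sSup p.2) γ < δ := by
    rw [hδdef, Ordinal.add_one_eq_succ]; exact Order.lt_succ _
  have hσδ : sSup p.2 < δ := (le_max_left _ _).trans_lt hltδ
  have hγδ : γ < δ := (le_max_right _ _).trans_lt hltδ
  have helt : ∀ e ∈ p.2, e < δ := fun e he => (le_csSup hbdd he).trans_lt hσδ
  have hsup' : sSup (insert δ p.2) = δ := by
    rw [csSup_insert hbdd hcne]
    exact sup_eq_left.mpr (le_of_lt hσδ)
  refine ⟨(p.1, insert δ p.2), ⟨⟨⟨?_, ⟨δ, hδκ, ?_⟩, ?_⟩, ?_, ?_⟩, ?_⟩, ⟨?_, ?_⟩, ?_⟩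
  · intro x hx
    rcases mem_insert_iff.mp hx with rfl | hx'
    · exact mem_Iio.mpr hδκ
    · exact hcb.1 hx'
  · intro a ha
    rcases mem_insert_iff.mp ha with rfl | ha'
    · exact le_rfl
    · exact (helt a ha').le
  · intro α hακ hα0 hlp
    by_cases hαδ : α = δ
    · exact hαδ ▸ mem_insert _ _
    rcases lt_or_gt_of_ne hαδ with hlt | hgt
    · refine mem_insert_of_mem _ (hcb.2.2 α hακ hα0 ?_)
      intro b hb
      obtain ⟨e, he, h1, h2⟩ := hlp b hb
      rcases mem_insert_iff.mp he with rfl | he'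
      · exact absurd (h2.trans hlt) (lt_irrefl _)
      · exact ⟨e, he', h1, h2⟩
    · exfalso
      obtain ⟨e, he, h1, h2⟩ := hlp δ hgt
      rcases mem_insert_iff.mp he with rfl | he'
      · exact lt_irrefl _ h1
      · exact absurd (helt e he') (not_lt.mpr h1.le)
  · show p.1 ⊆ Iio (sSup (insert δ p.2))
    rw [hsup']
    exact fun x hx => mem_Iio.mpr ((mem_Iio.mp (hsub hx)).trans hσδ)
  · intro α hα hin
    rcases mem_insert_iff.mp hα with rfl | hα'
    · rw [hδdef] at hin
      exact absurd hin (not_isInaccOrd_succ _)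
    · exact hinacc α hα' hin
  · exact ⟨δ, mem_insert _ _, fun h => lt_asymm hγδ (mem_Iio.mp h)⟩
  · show p.1 ∩ Iio (sSup p.2) = p.1
    exact inter_eq_left.mpr hsub
  · show insert δ p.2 ∩ Iic (sSup p.2) = p.2
    ext x
    simp only [mem_inter_iff, mem_insert_iff, mem_Iic]
    constructor
    · rintro ⟨rfl | hx, hle⟩
      · exact absurd hle (not_le.mpr hσδ)
      · exact hx
    · exact fun hx => ⟨Or.inr hx, le_csSup hbdd hx⟩
  · intro h
    have h2 := congrArg Prod.snd h
    exact (insert_nonempty _ _).ne_empty h2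

lemma key_union {κ : Cardinal.{0}} (hκ : κ.IsInaccessible) {A : Ordinal.{0} → Set Ordinal.{0}}
    {γ : Ordinal.{0}} (hγ0 : 0 < γ) (hγ : γ < κ.ord)
    (g : Ordinal.{0} → Set Ordinal.{0} × Set Ordinal.{0})
    (hcond : ∀ α < γ, IsCond κ.ord A (g α))
    (hD : ∀ α < γ, g α = (∅, ∅) ∨ g α ∈ DSet κ.ord A γ)
    (hdir : ∀ α < γ, ∀ β < γ, ∃ δ, δ < γ ∧ CondLE (g δ) (g α) ∧ CondLE (g δ) (g β)) :
    ∃ R, IsCond κ.ord A R ∧ (R = (∅, ∅) ∨ R ∈ DSet κ.ord A γ) ∧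
      (∀ α < γ, CondLE R (g α)) ∧ ((∀ α < γ, g α = (∅, ∅)) → R = (∅, ∅)) := by
  classical
  set S : Set Ordinal.{0} := ⋃ α ∈ Iio γ, (g α).1 with hSdef
  set C : Set Ordinal.{0} := ⋃ α ∈ Iio γ, (g α).2 with hCdef
  have hCm : ∀ x : Ordinal.{0}, x ∈ C ↔ ∃ α, α < γ ∧ x ∈ (g α).2 := by
    intro x
    rw [hCdef]
    simp [mem_iUnion]
  have hSm : ∀ x : Ordinal.{0}, x ∈ S ↔ ∃ α, α < γ ∧ x ∈ (g α).1 := by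
    intro x
    rw [hSdef]
    simp [mem_iUnion]
  have hsubκ : C ⊆ Iio κ.ord := by
    intro x hx
    obtain ⟨α, hα, hx2⟩ := (hCm x).mp hx
    exact (hcond α hα).1.1 hx2
  have hbddC : BddAbove C := ⟨κ.ord, fun x hx => (mem_Iio.mp (hsubκ hx)).le⟩
  have hsubLE : ∀ {a b : Set Ordinal.{0} × Set Ordinal.{0}}, CondLE a b →
      b.1 ⊆ a.1 ∧ b.2 ⊆ a.2 := by
    rintro a b ⟨h1, h2⟩
    exact ⟨h1 ▸ inter_subset_left, h2 ▸ inter_subset_left⟩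
  have hcohC : ∀ α, α < γ → C ∩ Iic (sSup (g α).2) = (g α).2 := by
    intro α hα
    apply Subset.antisymm
    · rintro x ⟨hxC, hxle⟩
      obtain ⟨β, hβ, hxβ⟩ := (hCm x).mp hxC
      obtain ⟨δ, hδ, hδα, hδβ⟩ := hdir α hα β hβ
      have hx : x ∈ (g δ).2 := (hsubLE hδβ).2 hxβ
      rw [← hδα.2]
      exact ⟨hx, hxle⟩
    · intro x hx
      exact ⟨(hCm x).mpr ⟨α, hα, hx⟩, le_csSup (bdd_of_closedBdd (hcond α hα).1) hx⟩
  have hcohS : ∀ α, α < γ → S ∩ Iio (sSup (g α).2) = (g α).1 := by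
    intro α hα
    apply Subset.antisymm
    · rintro x ⟨hxS, hxlt⟩
      obtain ⟨β, hβ, hxβ⟩ := (hSm x).mp hxS
      obtain ⟨δ, hδ, hδα, hδβ⟩ := hdir α hα β hβ
      have hx : x ∈ (g δ).1 := (hsubLE hδβ).1 hxβ
      rw [← hδα.1]
      exact ⟨hx, hxlt⟩
    · intro x hx
      exact ⟨(hSm x).mpr ⟨α, hα, hx⟩, (hcond α hα).2.1 hx⟩
  rcases eq_empty_or_nonempty C with hCe | hCne
  · have hall : ∀ α < γ, g α = (∅, ∅) := by
      intro α hα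
      apply snd_empty_eq_bot (hcond α hα)
      apply eq_empty_of_subset_empty
      rw [← hCe]
      exact fun x hx => (hCm x).mpr ⟨α, hα, hx⟩
    refine ⟨(∅, ∅), isCond_bot (ord_pos_of_inacc hκ), Or.inl rfl, ?_, fun _ => rfl⟩
    intro α hα
    rw [hall α hα]
    exact condLE_bot_bot
  · set σ : Ordinal.{0} := sSup C with hσdef
    have hleσ : ∀ x ∈ C, x ≤ σ := fun x hx => le_csSup hbddC hx
    have hsupleσ : ∀ α, α < γ → sSup (g α).2 ≤ σ := by
      intro α hα
      rcases eq_empty_or_nonempty (g α).2 with h | h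
      · rw [h]
        simp only [csSup_empty, Ordinal.bot_eq_zero]
        exact (zero_le : (0 : Ordinal.{0}) ≤ σ)
      · exact csSup_le h fun x hx => hleσ x ((hCm x).mpr ⟨α, hα, hx⟩)
    have hwit : ∃ e ∈ C, γ ≤ e := by
      obtain ⟨x, hx⟩ := hCne
      obtain ⟨α, hα, hxα⟩ := (hCm x).mp hx
      have hne : g α ≠ (∅, ∅) := by
        intro h
        rw [h] at hxα
        exact notMem_empty x hxα
      rcases hD α hα with h | h
      · exact absurd h hne
      · obtain ⟨e, heC, henot⟩ := h.2
        exact ⟨e, (hCm e).mpr ⟨α, hα, heC⟩, le_of_not_gt fun hh => henot (mem_Iio.mpr hh)⟩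
    have hγσ : γ ≤ σ := by
      obtain ⟨e, heC, hγe⟩ := hwit
      exact hγe.trans (hleσ e heC)
    have hσ0 : σ ≠ 0 := by
      intro h
      rw [h] at hγσ
      exact absurd hγσ (not_le.mpr hγ0)
    have hγne : Nonempty γ.ToType := Ordinal.toType_nonempty_iff_ne_zero.mpr hγ0.ne'
    set G : γ.ToType → Ordinal.{0} :=
      fun i => sSup ((g ((Ordinal.ToType.mk (o := γ)).symm i).1).2) with hGdef
    have hGlt : ∀ i, ((Ordinal.ToType.mk (o := γ)).symm i).1 < γ :=
      fun i => ((Ordinal.ToType.mk (o := γ)).symm i).2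
    have hGleσ : ∀ i, G i ≤ σ := fun i => hsupleσ _ (hGlt i)
    have hbddG : BddAbove (Set.range G) := by
      refine ⟨σ, ?_⟩
      rintro x ⟨i, rfl⟩
      exact hGleσ i
    have hσG : σ = ⨆ i, G i := by
      apply le_antisymm
      · rw [hσdef]
        apply csSup_le hCne
        intro x hx
        obtain ⟨α, hα, hxα⟩ := (hCm x).mp hx
        have hle : x ≤ G (Ordinal.ToType.mk (o := γ) ⟨α, hα⟩) := by
          rw [hGdef]
          simp only [OrderIso.symm_apply_apply]
          exact le_csSup (bdd_of_closedBdd (hcond α hα).1) hxα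
        exact hle.trans (le_ciSup hbddG _)
      · exact ciSup_le hGleσ
    have hσκ : σ < κ.ord := by
      rw [hσG]
      apply Ordinal.iSup_lt_ord
      · rw [Cardinal.mk_toType, hκ.isRegular.cof_eq]
        exact Cardinal.lt_ord.mp hγ
      · intro i
        rcases eq_empty_or_nonempty ((g ((Ordinal.ToType.mk (o := γ)).symm i).1).2) with h | h
        · rw [hGdef]
          simp only
          rw [h]
          simp only [csSup_empty, Ordinal.bot_eq_zero]
          exact ord_pos_of_inacc hκ
        · exact (hcond _ (hGlt i)).1.1 (sSup_mem_closedBdd (hcond _ (hGlt i)).1 h)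
    have hGltσ_of : σ ∉ C → ∀ i, G i < σ := by
      intro hσC i
      refine lt_of_le_of_ne (hGleσ i) fun h => ?_
      rcases eq_empty_or_nonempty ((g ((Ordinal.ToType.mk (o := γ)).symm i).1).2) with he | hne
      · rw [hGdef] at h
        simp only at h
        rw [he] at h
        simp only [csSup_empty, Ordinal.bot_eq_zero] at h
        exact hσ0 h.symm
      · refine hσC ((hCm σ).mpr ⟨_, hGlt i, ?_⟩)
        have hm := sSup_mem_closedBdd (hcond _ (hGlt i)).1 hne
        rw [hGdef] at h
        simp only at h
        rw [h] at hm
        exact hm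
    have hsupR : sSup (insert σ C) = σ := by
      rw [csSup_insert hbddC hCne, ← hσdef]
      exact sup_idem σ
    have hSsubσ : S ⊆ Iio σ := by
      intro x hx
      obtain ⟨α, hα, hxα⟩ := (hSm x).mp hx
      exact mem_Iio.mpr (lt_of_lt_of_le (mem_Iio.mp ((hcond α hα).2.1 hxα)) (hsupleσ α hα))
    have hclosed : IsClosedIn κ.ord (insert σ C) := by
      intro α hακ hα0 hlp
      by_cases hασ : α = σ
      · exact hασ ▸ mem_insert _ _
      rcases lt_or_gt_of_ne hασ with hlt | hgt
      · have hlt' : α < sSup C := by rw [← hσdef]; exact hlt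
        obtain ⟨e0, he0, hαe0⟩ := exists_lt_of_lt_csSup hCne hlt'
        obtain ⟨δ0, hδ0, he0δ⟩ := (hCm e0).mp he0
        have hμ : α < sSup (g δ0).2 :=
          lt_of_lt_of_le hαe0 (le_csSup (bdd_of_closedBdd (hcond δ0 hδ0).1) he0δ)
        have hmem : α ∈ (g δ0).2 := by
          apply (hcond δ0 hδ0).1.2.2 α hακ hα0
          intro b hb
          obtain ⟨e, he, h1, h2⟩ := hlp b hb
          rcases mem_insert_iff.mp he with rfl | heC
          · exact absurd (h2.trans hlt) (lt_irrefl _)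
          · refine ⟨e, ?_, h1, h2⟩
            rw [← hcohC δ0 hδ0]
            exact ⟨heC, (h2.trans hμ).le⟩
        exact mem_insert_of_mem _ ((hCm α).mpr ⟨δ0, hδ0, hmem⟩)
      · exfalso
        obtain ⟨e, he, h1, h2⟩ := hlp σ hgt
        rcases mem_insert_iff.mp he with rfl | heC
        · exact lt_irrefl _ h1
        · exact absurd (hleσ e heC) (not_le.mpr h1)
    have hRle : ∀ α, α < γ → CondLE (S, insert σ C) (g α) := by
      intro α hα
      refine ⟨hcohS α hα, ?_⟩
      show insert σ C ∩ Iic (sSup (g α).2) = (g α).2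
      apply Subset.antisymm
      · rintro x ⟨hx, hxle⟩
        rcases mem_insert_iff.mp hx with rfl | hxC
        · have hEq : sSup (g α).2 = σ := le_antisymm (hsupleσ α hα) hxle
          have hne : (g α).2.Nonempty := by
            rcases eq_empty_or_nonempty (g α).2 with h | h
            · exfalso
              rw [h] at hEq
              simp only [csSup_empty, Ordinal.bot_eq_zero] at hEq
              exact hσ0 hEq.symm
            · exact h
          exact hEq ▸ sSup_mem_closedBdd (hcond α hα).1 hne
        · rw [← hcohC α hα]
          exact ⟨hxC, hxle⟩
      · intro x hx
        exact ⟨mem_insert_of_mem _ ((hCm x).mpr ⟨α, hα, hx⟩),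
          le_csSup (bdd_of_closedBdd (hcond α hα).1) hx⟩
    have hinC : ∀ α', α' ∈ C → IsInaccOrd α' → S ∩ Iio α' ≠ A α' := by
      intro α' hα' hin
      obtain ⟨δ, hδ, hmem⟩ := (hCm α').mp hα'
      have hle : α' ≤ sSup (g δ).2 := le_csSup (bdd_of_closedBdd (hcond δ hδ).1) hmem
      have heq : S ∩ Iio α' = (g δ).1 ∩ Iio α' := by
        apply Subset.antisymm
        · rintro x ⟨hxS, hxlt⟩
          have hx2 : x ∈ S ∩ Iio (sSup (g δ).2) :=
            ⟨hxS, mem_Iio.mpr (lt_of_lt_of_le (mem_Iio.mp hxlt) hle)⟩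
          rw [hcohS δ hδ] at hx2
          exact ⟨hx2, hxlt⟩
        · rintro x ⟨hx1, hxlt⟩
          exact ⟨(hSm x).mpr ⟨δ, hδ, hx1⟩, hxlt⟩
      rw [heq]
      exact (hcond δ hδ).2.2 α' hmem hin
    have hinaccR : ∀ α' ∈ insert σ C, IsInaccOrd α' → S ∩ Iio α' ≠ A α' := by
      intro α' hα' hin
      rcases mem_insert_iff.mp hα' with rfl | hC'
      · by_cases hσC : σ ∈ C
        · exact hinC σ hσC hin
        · exfalso
          obtain ⟨d, hd, hdσ⟩ := hin
          have hH : ∀ i, G i < iSup G := by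
            intro i
            rw [← hσG]
            exact hGltσ_of hσC i
          have hcof : σ.cof ≤ γ.card := by
            rw [hσG]
            calc (iSup G).cof ≤ #γ.ToType := Ordinal.cof_iSup_le hH
            _ = γ.card := Cardinal.mk_toType γ
          have hdle : d ≤ γ.card := by
            have hc : σ.cof = d := by rw [hdσ, hd.isRegular.cof_eq]
            rwa [hc] at hcof
          have hσγ : σ ≤ γ := by
            calc σ = d.ord := hdσ
            _ ≤ γ.card.ord := Cardinal.ord_le_ord.mpr hdle
            _ ≤ γ := Cardinal.ord_card_le γ
          obtain ⟨e, heC, hγe⟩ := hwit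
          have heσ : e = σ := le_antisymm (hleσ e heC) (hσγ.trans hγe)
          exact hσC (heσ ▸ heC)
      · exact hinC α' hC' hin
    have hRcond : IsCond κ.ord A (S, insert σ C) := by
      refine ⟨⟨?_, ⟨σ, hσκ, ?_⟩, hclosed⟩, ?_, hinaccR⟩
      · intro x hx
        rcases mem_insert_iff.mp hx with rfl | hx'
        · exact mem_Iio.mpr hσκ
        · exact hsubκ hx'
      · intro a ha
        rcases mem_insert_iff.mp ha with rfl | ha'
        · exact le_rfl
        · exact hleσ a ha'
      · show S ⊆ Iio (sSup (insert σ C))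
        rw [hsupR]
        exact hSsubσ
    refine ⟨(S, insert σ C), hRcond,
      Or.inr ⟨hRcond, ⟨σ, mem_insert _ _, fun h => absurd (mem_Iio.mp h) (not_lt.mpr hγσ)⟩⟩,
      hRle, ?_⟩
    intro hall
    obtain ⟨x, hx⟩ := hCne
    obtain ⟨α, hα, hxα⟩ := (hCm x).mp hx
    rw [hall α hα] at hxα
    exact absurd hxα (notMem_empty x)

end Aux

/-- For a strongly inaccessible `κ`, a potential `◊_κ` sequence `A` and
`0 < γ < κ`: in the `<κ`-support product of `κ⁺` many copies of the diamond
killing poset, the set `D` of conditions all of whose coordinates are trivial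
or in `D_γ` is dense, and `D` is `≤γ`-directed closed. -/
theorem prodDSet_dense_and_directed_closed (κ : Cardinal.{0}) (hκ : κ.IsInaccessible)
    (A : Ordinal.{0} → Set Ordinal.{0}) (hA : ∀ α < κ.ord, A α ⊆ Set.Iio α)
    (γ : Ordinal.{0}) (hγ0 : 0 < γ) (hγ : γ < κ.ord) :
    (∀ p, IsProdCond κ A p → ∃ q ∈ ProdDSet κ A γ, ProdLE q p) ∧
    (∀ f : Ordinal.{0} → Ordinal.{0} → Set Ordinal.{0} × Set Ordinal.{0},
      (∀ α < γ, f α ∈ ProdDSet κ A γ) →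
      (∀ α < γ, ∀ β < γ, ∃ δ < γ, ProdLE (f δ) (f α) ∧ ProdLE (f δ) (f β)) →
      ∃ r ∈ ProdDSet κ A γ, ∀ α < γ, ProdLE r (f α)) := by
  classical
  constructor
  · intro p hp
    have hex : ∀ ξ : Ordinal.{0}, ∃ q : Set Ordinal.{0} × Set Ordinal.{0},
        CondLE q (p ξ) ∧ (q = (∅, ∅) ↔ p ξ = (∅, ∅)) ∧ IsCond κ.ord A q ∧
          (q = (∅, ∅) ∨ q ∈ DSet κ.ord A γ) := by
      intro ξ
      by_cases hb : p ξ = (∅, ∅)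
      · exact ⟨(∅, ∅), hb ▸ condLE_bot_bot, by simp [hb],
          isCond_bot (ord_pos_of_inacc hκ), Or.inl rfl⟩
      · have hξ : ξ < (Order.succ κ).ord := by
          by_contra h
          exact hb (hp.2.1 ξ h)
        obtain ⟨q, hq1, hq2, hq3⟩ := extend_cond hκ hγ (hp.1 ξ hξ) hb
        exact ⟨q, hq2, iff_of_false hq3 hb, hq1.1, Or.inr hq1⟩
    choose q hq1 hq2 hq3 hq4 using hex
    refine ⟨q, ⟨⟨fun ξ _ => hq3 ξ, fun ξ hξ => (hq2 ξ).mpr (hp.2.1 ξ hξ), ?_⟩,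
      fun ξ _ => hq4 ξ⟩, hq1⟩
    refine lt_of_eq_of_lt (Cardinal.mk_congr (Equiv.subtypeEquivRight fun ξ => ?_)) hp.2.2
    exact not_congr (hq2 ξ)
  · intro f hf hdir
    have hco : ∀ (ξ : Ordinal.{0}) (α : Ordinal.{0}), α < γ → IsCond κ.ord A (f α ξ) := by
      intro ξ α hα
      by_cases hξ : ξ < (Order.succ κ).ord
      · exact (hf α hα).1.1 ξ hξ
      · rw [(hf α hα).1.2.1 ξ hξ]
        exact isCond_bot (ord_pos_of_inacc hκ)
    have hDξ : ∀ (ξ α : Ordinal.{0}), α < γ →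
        f α ξ = (∅, ∅) ∨ f α ξ ∈ DSet κ.ord A γ := by
      intro ξ α hα
      by_cases hξ : ξ < (Order.succ κ).ord
      · exact (hf α hα).2 ξ hξ
      · exact Or.inl ((hf α hα).1.2.1 ξ hξ)
    have hex : ∀ ξ : Ordinal.{0}, ∃ R, IsCond κ.ord A R ∧
        (R = (∅, ∅) ∨ R ∈ DSet κ.ord A γ) ∧
        (∀ α < γ, CondLE R (f α ξ)) ∧ ((∀ α < γ, f α ξ = (∅, ∅)) → R = (∅, ∅)) := by
      intro ξ
      apply key_union hκ hγ0 hγ (fun α => f α ξ) (fun α hα => hco ξ α hα)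
        (fun α hα => hDξ ξ α hα)
      intro α hα β hβ
      obtain ⟨δ, hδ, h1, h2⟩ := hdir α hα β hβ
      exact ⟨δ, hδ, h1 ξ, h2 ξ⟩
    choose r hr1 hr2 hr3 hr4 using hex
    have hoff : ∀ ξ, ¬ ξ < (Order.succ κ).ord → r ξ = (∅, ∅) := by
      intro ξ hξ
      exact hr4 ξ (fun α hα => (hf α hα).1.2.1 ξ hξ)
    have hcard : Cardinal.mk {ξ : Ordinal.{0} // r ξ ≠ (∅, ∅)} < Cardinal.lift.{1,0} κ := by
      have hsub : {ξ : Ordinal.{0} | r ξ ≠ (∅, ∅)} ⊆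
          ⋃ (α : ↥(Iio γ)), {ξ : Ordinal.{0} | f α.1 ξ ≠ (∅, ∅)} := by
        intro ξ hξ
        by_contra h
        simp only [mem_iUnion, mem_setOf_eq, not_exists, not_not] at h
        exact hξ (hr4 ξ fun α hα => h ⟨α, hα⟩)
      have hreg : (Cardinal.lift.{1,0} κ).IsRegular := by
        constructor
        · rw [← Cardinal.lift_aleph0.{1,0}]
          exact Cardinal.lift_le.mpr hκ.isRegular.1
        · rw [← Cardinal.lift_ord, ← Ordinal.lift_cof, hκ.isRegular.cof_eq]
      calc Cardinal.mk {ξ : Ordinal.{0} // r ξ ≠ (∅, ∅)}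
          ≤ Cardinal.mk (⋃ (α : ↥(Iio γ)), {ξ : Ordinal.{0} | f α.1 ξ ≠ (∅, ∅)}) :=
            Cardinal.mk_le_mk_of_subset hsub
        _ ≤ Cardinal.sum (fun α : ↥(Iio γ) =>
              Cardinal.mk {ξ : Ordinal.{0} | f α.1 ξ ≠ (∅, ∅)}) :=
            Cardinal.mk_iUnion_le_sum_mk
        _ < Cardinal.lift.{1,0} κ := by
            apply Cardinal.sum_lt_of_isRegular hreg
            · rw [Ordinal.mk_Iio_ordinal]
              exact Cardinal.lift_lt.mpr (Cardinal.lt_ord.mp hγ)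
            · intro α
              exact (hf α.1 α.2).1.2.2
    exact ⟨r, ⟨⟨fun ξ _ => hr1 ξ, hoff, hcard⟩, fun ξ _ => hr2 ξ⟩,
      fun α hα ξ => hr3 ξ α hα⟩
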